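/- (Lemma 3, high-cost case, with fine.) Fix T > 0, Z_A ∈ (0, 1/2], S1 ≥ 0, C1 ≥ 0, q^min > 0, and b ∈ [0, Z_A] with Z_A + b < 1. Suppose C1 + S1·(q^min)² ≥ T/(9·Z_A). Then the quadratic equation −3T·a² + a·(2T·b − 10T − 36·(C1 + S1·(q^min)²)) + T·(b² − 2b − 3) + 36·(C1 + S1·(q^min)²)·Z_A = 0 has exactly one positive real root a2, and a = min(a2, Z_A) maximizes φ1^F(a) = T(1−a−b)(3+a−b)²/18 − (C1 + S1·(q^min)²)·(a−Z_A)² on [0, Z_A]. -/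

import Mathlib

set_option maxHeartbeats 1000000 in

/-- Lemma 3 (high-cost case, with fine): if `C1 + S1 (q^min)² ≥ T/(9 Z_A)`, the
quadratic first-order condition has a unique positive root `a2`, and
`min a2 Z_A` maximizes vendor 1's reduced location utility under the fine. -/
theorem fine_location_best_response_high_cost
    (T ZA C1 S1 qmin b : ℝ)
    (hT : 0 < T) (hZA : ZA ∈ Set.Ioc (0:ℝ) (1/2))
    (hC1 : 0 ≤ C1) (hS1 : 0 ≤ S1) (hqmin : 0 < qmin)
    (hb : b ∈ Set.Icc (0:ℝ) ZA) (hZb : ZA + b < 1)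
    (hcost : T / (9 * ZA) ≤ C1 + S1 * qmin ^ 2) :
    let φ1 : ℝ → ℝ := fun a =>
      T * (1 - a - b) * (3 + a - b) ^ 2 / 18 -
        (C1 + S1 * qmin ^ 2) * (a - ZA) ^ 2
    let quad : ℝ → ℝ := fun a =>
      -3 * T * a ^ 2 + a * (2 * T * b - 10 * T - 36 * (C1 + S1 * qmin ^ 2)) +
        T * (b ^ 2 - 2 * b - 3) + 36 * (C1 + S1 * qmin ^ 2) * ZA
    ∃ a2 : ℝ, 0 < a2 ∧ quad a2 = 0 ∧
      (∀ x : ℝ, 0 < x → quad x = 0 → x = a2) ∧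
      ∀ a ∈ Set.Icc (0:ℝ) ZA, φ1 a ≤ φ1 (min a2 ZA) := by
  obtain ⟨hZA0, hZA2⟩ := hZA
  obtain ⟨hb0, hbZ⟩ := hb
  intro φ1 quad
  obtain ⟨K, hKdef⟩ : ∃ K : ℝ, C1 + S1 * qmin ^ 2 = K := ⟨_, rfl⟩
  have hKnn : 0 ≤ K := by rw [← hKdef]; positivity
  have hKZ : T ≤ 9 * K * ZA := by
    rw [hKdef] at hcost
    have h := (div_le_iff₀ (by positivity : (0:ℝ) < 9 * ZA)).mp hcost
    nlinarith
  have hb2 : b ≤ 1/2 := le_trans hbZ hZA2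
  obtain ⟨B, hBdef⟩ : ∃ B : ℝ, 2 * T * b - 10 * T - 36 * K = B := ⟨_, rfl⟩
  have hBneg : B < 0 := by rw [← hBdef]; nlinarith
  obtain ⟨C, hCdef⟩ : ∃ C : ℝ, T * (b ^ 2 - 2 * b - 3) + 36 * K * ZA = C := ⟨_, rfl⟩
  have hCpos : 0 < C := by rw [← hCdef]; nlinarith [sq_nonneg (b - 1/2)]
  obtain ⟨D, hDdef⟩ : ∃ D : ℝ, B ^ 2 + 12 * T * C = D := ⟨_, rfl⟩
  have hDpos : 0 < D := by rw [← hDdef]; nlinarith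
  have hsD : Real.sqrt D ^ 2 = D := Real.sq_sqrt hDpos.le
  have hsDnn : 0 ≤ Real.sqrt D := Real.sqrt_nonneg D
  have hsDgt : -B < Real.sqrt D := by
    rw [show (-B) = Real.sqrt (B ^ 2) by
      rw [Real.sqrt_sq_eq_abs, abs_of_neg hBneg]]
    exact Real.sqrt_lt_sqrt (sq_nonneg B) (by nlinarith)
  have hquadeq : ∀ x : ℝ, quad x = -3 * T * x ^ 2 + x * B + C := by
    intro x
    simp only [quad]
    rw [hKdef, ← hBdef, ← hCdef]
    ring
  obtain ⟨a2, ha2def⟩ : ∃ a2 : ℝ, (B + Real.sqrt D) / (6 * T) = a2 := ⟨_, rfl⟩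
  have ha2pos : 0 < a2 := by
    rw [← ha2def]; exact div_pos (by linarith) (by linarith)
  have hquad2 : quad a2 = 0 := by
    have hT12 : (12 * T) ≠ 0 := by positivity
    have hexp : -3 * T * a2 ^ 2 + a2 * B + C
        = (B ^ 2 - Real.sqrt D ^ 2 + 12 * T * C) / (12 * T) := by
      rw [← ha2def]; field_simp; linear_combination (0 : ℝ) * hsD
    rw [hquadeq, hexp, hsD, ← hDdef]; ring
  refine ⟨a2, ha2pos, hquad2, ?_, ?_⟩
  · intro x hx hqx
    have h := hquadeq x
    rw [hqx] at h
    have h2 := hquadeq a2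
    rw [hquad2] at h2
    have hfac : (x - a2) * (-3 * T * (x + a2) + B) = 0 := by
      linear_combination h2 - h
    have hneg : -3 * T * (x + a2) + B < 0 := by
      nlinarith [mul_pos hT (by linarith : (0:ℝ) < x + a2)]
    rcases mul_eq_zero.mp hfac with h' | h'
    · linarith
    · linarith
  · intro a ⟨ha0, haZ⟩
    obtain ⟨m, hmdef⟩ : ∃ m : ℝ, min a2 ZA = m := ⟨_, rfl⟩
    rw [hmdef]
    have hm0 : 0 ≤ m := by rw [← hmdef]; exact le_min ha2pos.le hZA0.le
    have h2' := hquadeq a2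
    rw [hquad2] at h2'
    have hqm : 0 ≤ quad m := by
      rcases min_cases a2 ZA with ⟨h1, h2⟩ | ⟨h1, h2⟩
      · rw [← hmdef, h1, hquad2]
      · rw [← hmdef, h1, hquadeq]
        have hZa2 : ZA ≤ a2 := h2.le
        have hfc : (0:ℝ) ≤ -B + 3 * T * (ZA + a2) := by
          have := mul_nonneg hT.le (by linarith : (0:ℝ) ≤ ZA + a2)
          linarith
        have hprod := mul_nonneg (by linarith : (0:ℝ) ≤ a2 - ZA) hfc
        nlinarith [hprod, h2']
    rw [hquadeq] at hqm
    have hkey : φ1 m - φ1 a =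
        (m - a) * (-3 * T * m ^ 2 + m * B + C) / 18 +
          (a - m) ^ 2 * ((T * (a + 2 * m) + T * (5 - b) + 18 * K) / 18) := by
      simp only [φ1]
      rw [hKdef, ← hBdef, ← hCdef]
      ring
    have hpos2 : 0 ≤ (a - m) ^ 2 * ((T * (a + 2 * m) + T * (5 - b) + 18 * K) / 18) := by
      apply mul_nonneg (sq_nonneg _)
      have h1 : 0 ≤ T * (a + 2 * m) := by positivity
      nlinarith
    have hpos1 : 0 ≤ (m - a) * (-3 * T * m ^ 2 + m * B + C) / 18 := by
      rcases min_cases a2 ZA with ⟨h1, h2⟩ | ⟨h1, h2⟩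
      · have hme : m = a2 := by rw [← hmdef, h1]
        rw [hme, ← h2']
        simp
      · have hma : a ≤ m := by rw [← hmdef, h1]; exact haZ
        have := mul_nonneg (by linarith : (0:ℝ) ≤ m - a) hqm
        linarith
    have hfin : 0 ≤ φ1 m - φ1 a := by
      rw [hkey]; exact add_nonneg hpos1 hpos2
    exact sub_nonneg.mp hfin
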